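/- For matrices B, C ∈ ℂ^{n×k}, the absolute value of trace(Bᴴ C) is at most the sum over i from 1 to k of σ_i(B)·σ_i(C), where σ_i denotes the i-th largest singular value. -/

import Mathlib

open scoped ComplexOrder
open Matrix

/-- The tuple `f` rearranged into decreasing order; `sortedDesc f 0` is the largest entry. -/
noncomputable def sortedDesc {m : ℕ} (f : Fin m → ℝ) : Fin m → ℝ :=
  fun i => (f ∘ Tuple.sort f) i.rev

/-- The singular values of a complex matrix, in decreasing order. -/
noncomputable def sv {n k : ℕ} (B : Matrix (Fin n) (Fin k) ℂ) : Fin k → ℝ :=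
  sortedDesc fun i =>
    Real.sqrt ((Matrix.posSemidef_conjTranspose_mul_self B).isHermitian.eigenvalues i)

/-- The trace (nuclear) norm: the sum of the singular values. -/
noncomputable def trNorm {n k : ℕ} (B : Matrix (Fin n) (Fin k) ℂ) : ℝ := ∑ i, sv B i

/-- The Frobenius norm. -/
noncomputable def frobNorm {n k : ℕ} (A : Matrix (Fin n) (Fin k) ℂ) : ℝ :=
  Real.sqrt (∑ i, ∑ j, ‖A i j‖ ^ 2)

/-- `‖sin Θ(R(X), R(Y))‖_F` where `Θ` is the diagonal matrix of canonical angles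
`θ_i = arccos σ_i(Xᴴ Y)` between the column spaces of `X` and `Y`. -/
noncomputable def sinThetaF {n k : ℕ} (X Y : Matrix (Fin n) (Fin k) ℂ) : ℝ :=
  Real.sqrt (∑ i, Real.sin (Real.arccos (sv (Xᴴ * Y) i)) ^ 2)

/-- The smallest singular value. -/
noncomputable def smin {n k : ℕ} (B : Matrix (Fin n) (Fin k) ℂ) : ℝ := ⨅ i, sv B i

/-- The spectral norm (largest singular value). -/
noncomputable def s2norm {n k : ℕ} (B : Matrix (Fin n) (Fin k) ℂ) : ℝ := ⨆ i, sv B i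

/-- The orthonormal polar factor `B (Bᴴ B)^{-1/2}` (for `B` of full column rank). -/
noncomputable def polarFactor {n k : ℕ} (B : Matrix (Fin n) (Fin k) ℂ) :
    Matrix (Fin n) (Fin k) ℂ :=
  B * ((Matrix.posSemidef_conjTranspose_mul_self B).isHermitian.eigenvectorUnitary.1 *
    diagonal ((↑) ∘ (√·) ∘ (Matrix.posSemidef_conjTranspose_mul_self B).isHermitian.eigenvalues) *
    (star (Matrix.posSemidef_conjTranspose_mul_self B).isHermitian.eigenvectorUnitary :
      Matrix (Fin k) (Fin k) ℂ))⁻¹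

/-- Eigenvalues of a Hermitian matrix, in decreasing order. -/
noncomputable def eigsDesc {n : ℕ} {H : Matrix (Fin n) (Fin n) ℂ} (hH : H.IsHermitian) :
    Fin n → ℝ :=
  sortedDesc hH.eigenvalues

section VNaux

open Finset

lemma sum_ite_le {k p : ℕ} (hp : p < k) (X : ℕ → ℝ) :
    ∑ i ∈ range k, (if i ≤ p then X i else 0) = ∑ i ∈ range (p + 1), X i := by
  rw [← Finset.sum_filter]
  congr 1
  ext i
  simp only [mem_filter, mem_range]
  omega

lemma rot3 {α : Type*} (s t u : Finset α) (F : α → α → α → ℝ) :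
    ∑ i ∈ s, ∑ j ∈ t, ∑ q ∈ u, F i j q = ∑ q ∈ u, ∑ i ∈ s, ∑ j ∈ t, F i j q :=
  calc ∑ i ∈ s, ∑ j ∈ t, ∑ q ∈ u, F i j q
      = ∑ i ∈ s, ∑ q ∈ u, ∑ j ∈ t, F i j q :=
        Finset.sum_congr rfl fun i _ => Finset.sum_comm
    _ = ∑ q ∈ u, ∑ i ∈ s, ∑ j ∈ t, F i j q := Finset.sum_comm

lemma swap4 {α : Type*} (s t u v : Finset α) (F : α → α → α → α → ℝ) :
    ∑ i ∈ s, ∑ j ∈ t, ∑ p ∈ u, ∑ q ∈ v, F i j p q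
      = ∑ p ∈ u, ∑ q ∈ v, ∑ i ∈ s, ∑ j ∈ t, F i j p q :=
  calc ∑ i ∈ s, ∑ j ∈ t, ∑ p ∈ u, ∑ q ∈ v, F i j p q
      = ∑ i ∈ s, ∑ p ∈ u, ∑ j ∈ t, ∑ q ∈ v, F i j p q :=
        Finset.sum_congr rfl fun i _ => Finset.sum_comm
    _ = ∑ p ∈ u, ∑ i ∈ s, ∑ j ∈ t, ∑ q ∈ v, F i j p q := Finset.sum_comm
    _ = ∑ p ∈ u, ∑ i ∈ s, ∑ q ∈ v, ∑ j ∈ t, F i j p q :=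
        Finset.sum_congr rfl fun p _ => Finset.sum_congr rfl fun i _ => Finset.sum_comm
    _ = ∑ p ∈ u, ∑ q ∈ v, ∑ i ∈ s, ∑ j ∈ t, F i j p q :=
        Finset.sum_congr rfl fun p _ => Finset.sum_comm

lemma key_substochastic {k : ℕ} (σ τ : ℕ → ℝ) (hσ : Antitone σ) (hτ : Antitone τ)
    (hσ0 : σ k = 0) (hτ0 : τ k = 0)
    (S : ℕ → ℕ → ℝ) (hS : ∀ i j, 0 ≤ S i j)
    (hrow : ∀ i, ∑ j ∈ range k, S i j ≤ 1)
    (hcol : ∀ j, ∑ i ∈ range k, S i j ≤ 1) :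
    ∑ i ∈ range k, ∑ j ∈ range k, σ i * τ j * S i j ≤ ∑ i ∈ range k, σ i * τ i := by
  set a : ℕ → ℝ := fun p => σ p - σ (p + 1) with ha_def
  set b : ℕ → ℝ := fun q => τ q - τ (q + 1) with hb_def
  have ha : ∀ p, 0 ≤ a p := fun p => sub_nonneg.2 (hσ (Nat.le_succ p))
  have hb : ∀ q, 0 ≤ b q := fun q => sub_nonneg.2 (hτ (Nat.le_succ q))
  have hσa : ∀ i ∈ range k, σ i = ∑ p ∈ range k, (if i ≤ p then a p else 0) := by
    intro i hi
    rw [mem_range] at hi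
    have h1 : ∑ p ∈ range k, (if i ≤ p then a p else 0) = ∑ p ∈ Finset.Ico i k, a p := by
      rw [← Finset.sum_filter]
      congr 1
      ext p
      simp only [mem_filter, mem_range, Finset.mem_Ico]
      omega
    rw [h1, Finset.sum_Ico_eq_sub _ hi.le, Finset.sum_range_sub' σ, Finset.sum_range_sub' σ, hσ0]
    ring
  have hτb : ∀ j ∈ range k, τ j = ∑ q ∈ range k, (if j ≤ q then b q else 0) := by
    intro j hj
    rw [mem_range] at hj
    have h1 : ∑ q ∈ range k, (if j ≤ q then b q else 0) = ∑ q ∈ Finset.Ico j k, b q := by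
      rw [← Finset.sum_filter]
      congr 1
      ext q
      simp only [mem_filter, mem_range, Finset.mem_Ico]
      omega
    rw [h1, Finset.sum_Ico_eq_sub _ hj.le, Finset.sum_range_sub' τ, Finset.sum_range_sub' τ, hτ0]
    ring
  set T : ℕ → ℕ → ℝ := fun p q => ∑ i ∈ range (p + 1), ∑ j ∈ range (q + 1), S i j with hT_def
  have hT : ∀ p < k, ∀ q < k, T p q ≤ (min p q : ℕ) + 1 := by
    intro p hp q hq
    have h1 : T p q ≤ (p : ℝ) + 1 := by
      calc T p q ≤ ∑ i ∈ range (p + 1), ∑ j ∈ range k, S i j := by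
            apply Finset.sum_le_sum
            intro i _
            exact Finset.sum_le_sum_of_subset_of_nonneg
              (Finset.range_subset_range.2 hq) (fun j _ _ => hS i j)
        _ ≤ ∑ _i ∈ range (p + 1), (1 : ℝ) := Finset.sum_le_sum fun i _ => hrow i
        _ = (p : ℝ) + 1 := by simp
    have h2 : T p q ≤ (q : ℝ) + 1 := by
      calc T p q = ∑ j ∈ range (q + 1), ∑ i ∈ range (p + 1), S i j := Finset.sum_comm
        _ ≤ ∑ j ∈ range (q + 1), ∑ i ∈ range k, S i j := by
            apply Finset.sum_le_sum
            intro j _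
            exact Finset.sum_le_sum_of_subset_of_nonneg
              (Finset.range_subset_range.2 hp) (fun i _ _ => hS i j)
        _ ≤ ∑ _j ∈ range (q + 1), (1 : ℝ) := Finset.sum_le_sum fun j _ => hcol j
        _ = (q : ℝ) + 1 := by simp
    rcases le_total p q with h | h
    · rw [min_eq_left h]; exact h1
    · rw [min_eq_right h]; exact h2
  -- LHS rewrite
  have hLHS : ∑ i ∈ range k, ∑ j ∈ range k, σ i * τ j * S i j
      = ∑ p ∈ range k, ∑ q ∈ range k, a p * b q * T p q := by
    calc ∑ i ∈ range k, ∑ j ∈ range k, σ i * τ j * S i j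
        = ∑ i ∈ range k, ∑ j ∈ range k, ∑ p ∈ range k, ∑ q ∈ range k,
            ((if i ≤ p then a p else 0) * (if j ≤ q then b q else 0) * S i j) := by
          refine Finset.sum_congr rfl fun i hi => Finset.sum_congr rfl fun j hj => ?_
          rw [hσa i hi, hτb j hj, Finset.sum_mul_sum]
          simp only [Finset.sum_mul]
      _ = ∑ p ∈ range k, ∑ q ∈ range k, ∑ i ∈ range k, ∑ j ∈ range k,
            ((if i ≤ p then a p else 0) * (if j ≤ q then b q else 0) * S i j) :=
          swap4 _ _ _ _ _
      _ = ∑ p ∈ range k, ∑ q ∈ range k, a p * b q * T p q := by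
          refine Finset.sum_congr rfl fun p hp => Finset.sum_congr rfl fun q hq => ?_
          rw [mem_range] at hp hq
          have inner_eq : ∀ i, ∑ j ∈ range k,
              ((if i ≤ p then a p else 0) * (if j ≤ q then b q else 0) * S i j)
              = if i ≤ p then ∑ j ∈ range (q + 1), a p * b q * S i j else 0 := by
            intro i
            by_cases hip : i ≤ p
            · simp only [hip, if_true]
              rw [← sum_ite_le hq]
              exact Finset.sum_congr rfl fun j _ => by split_ifs <;> ring
            · simp [hip]
          simp only [inner_eq]
          rw [sum_ite_le hp, hT_def]
          simp only [Finset.mul_sum]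
  -- RHS rewrite
  have hRHS : ∑ i ∈ range k, σ i * τ i
      = ∑ p ∈ range k, ∑ q ∈ range k, a p * b q * ((min p q : ℕ) + 1) := by
    calc ∑ i ∈ range k, σ i * τ i
        = ∑ i ∈ range k, ∑ p ∈ range k, ∑ q ∈ range k,
            ((if i ≤ p then a p else 0) * (if i ≤ q then b q else 0)) := by
          refine Finset.sum_congr rfl fun i hi => ?_
          rw [hσa i hi, hτb i hi, Finset.sum_mul_sum]
      _ = ∑ p ∈ range k, ∑ q ∈ range k, ∑ i ∈ range k,
            ((if i ≤ p then a p else 0) * (if i ≤ q then b q else 0)) := by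
          calc ∑ i ∈ range k, ∑ p ∈ range k, ∑ q ∈ range k,
                ((if i ≤ p then a p else 0) * (if i ≤ q then b q else 0))
              = ∑ p ∈ range k, ∑ i ∈ range k, ∑ q ∈ range k,
                ((if i ≤ p then a p else 0) * (if i ≤ q then b q else 0)) := Finset.sum_comm
            _ = ∑ p ∈ range k, ∑ q ∈ range k, ∑ i ∈ range k,
                ((if i ≤ p then a p else 0) * (if i ≤ q then b q else 0)) :=
                Finset.sum_congr rfl fun p _ => Finset.sum_comm
      _ = ∑ p ∈ range k, ∑ q ∈ range k, a p * b q * ((min p q : ℕ) + 1) := by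
          refine Finset.sum_congr rfl fun p hp => Finset.sum_congr rfl fun q hq => ?_
          rw [mem_range] at hp hq
          have hmin : min p q < k := lt_of_le_of_lt (min_le_left p q) hp
          have term_eq : ∀ i, (if i ≤ p then a p else 0) * (if i ≤ q then b q else 0)
              = if i ≤ min p q then a p * b q else 0 := by
            intro i
            simp only [le_inf_iff]
            split_ifs <;> (try (exfalso; tauto)) <;> ring
          simp only [term_eq]
          rw [sum_ite_le hmin, Finset.sum_const, Finset.card_range, nsmul_eq_mul]
          push_cast
          ring
  rw [hLHS, hRHS]
  refine Finset.sum_le_sum fun p hp => Finset.sum_le_sum fun q hq => ?_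
  rw [mem_range] at hp hq
  exact mul_le_mul_of_nonneg_left (hT p hp q hq) (mul_nonneg (ha p) (hb q))

open Matrix Finset

-- Cauchy-Schwarz with square roots over ℝ
lemma cs_sqrt {ι : Type*} (s : Finset ι) (f g : ι → ℝ) :
    ∑ i ∈ s, f i * g i ≤ Real.sqrt (∑ i ∈ s, f i ^ 2) * Real.sqrt (∑ i ∈ s, g i ^ 2) := by
  have h := sum_mul_sq_le_sq_mul_sq s f g
  calc ∑ i ∈ s, f i * g i ≤ |∑ i ∈ s, f i * g i| := le_abs_self _
    _ = Real.sqrt ((∑ i ∈ s, f i * g i) ^ 2) := (Real.sqrt_sq_eq_abs _).symm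
    _ ≤ Real.sqrt ((∑ i ∈ s, f i ^ 2) * ∑ i ∈ s, g i ^ 2) := Real.sqrt_le_sqrt h
    _ = _ := Real.sqrt_mul (Finset.sum_nonneg fun i _ => sq_nonneg _) _

-- entry of Wᴴ * W as sum of abs squares
lemma col_norm_sq {m k : ℕ} (W : Matrix (Fin m) (Fin k) ℂ) (i : Fin k) :
    ((∑ r, ‖W r i‖ ^ 2 : ℝ) : ℂ) = (Wᴴ * W) i i := by
  simp only [Matrix.mul_apply, Matrix.conjTranspose_apply]
  push_cast
  refine Finset.sum_congr rfl fun r _ => ?_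
  rw [← Complex.ofReal_pow, ← Complex.normSq_eq_norm_sq, Complex.normSq_eq_conj_mul_self]
  rfl

example {k : ℕ} (M : Matrix (Fin k) (Fin k) ℂ) (h : M ∈ Matrix.unitaryGroup (Fin k) ℂ)
    (i : Fin k) : ∑ j, ‖M j i‖ ^ 2 = 1 := by
  have h1 : Mᴴ * M = 1 := by
    rw [Matrix.mem_unitaryGroup_iff'] at h
    simpa [Matrix.star_eq_conjTranspose] using h
  have := col_norm_sq M i
  rw [h1] at this
  have h2 : ((∑ r : Fin k, ‖M r i‖ ^ 2 : ℝ) : ℂ) = ((1:ℝ):ℂ) := by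
    rw [this]; simp
  exact_mod_cast h2

/-- The substochastic matrix in von Neumann's inequality. -/
noncomputable def Smat {n k : ℕ} (W Z : Matrix (Fin n) (Fin k) ℂ) (M : Matrix (Fin k) (Fin k) ℂ)
    (d e : Fin k → ℝ) : Fin k → Fin k → ℝ := fun i j =>
  if d i = 0 ∨ e j = 0 then 0
  else ‖M j i‖ * ‖(Wᴴ * Z) i j‖ / (Real.sqrt (d i) * Real.sqrt (e j))

lemma Smat_nonneg {n k : ℕ} (W Z : Matrix (Fin n) (Fin k) ℂ) (M : Matrix (Fin k) (Fin k) ℂ)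
    (d e : Fin k → ℝ) (i j : Fin k) : 0 ≤ Smat W Z M d e i j := by
  unfold Smat
  split
  · exact le_refl 0
  · positivity

section
variable {n k : ℕ}

lemma Smat_rowsum_le (W Z : Matrix (Fin n) (Fin k) ℂ) (M : Matrix (Fin k) (Fin k) ℂ)
    (d e : Fin k → ℝ) (hd : ∀ i, 0 ≤ d i) (he : ∀ j, 0 ≤ e j)
    (hW : Wᴴ * W = Matrix.diagonal (fun i => (d i : ℂ)))
    (hZ : Zᴴ * Z = Matrix.diagonal (fun j => (e j : ℂ)))
    (i : Fin k) (hM : ∑ j, ‖M j i‖ ^ 2 = 1) :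
    ∑ j, (if d i = 0 ∨ e j = 0 then (0:ℝ)
      else ‖M j i‖ * ‖(Wᴴ * Z) i j‖
        / (Real.sqrt (d i) * Real.sqrt (e j))) ≤ 1 := by
  by_cases hdi : d i = 0
  · simp [hdi]
  have hdipos : 0 < d i := lt_of_le_of_ne (hd i) (Ne.symm hdi)
  set σ : ℝ := Real.sqrt (d i) with hσdef
  have hσpos : 0 < σ := Real.sqrt_pos.2 hdipos
  -- the normalized i-th column of W
  set u : EuclideanSpace ℂ (Fin n) :=
    (WithLp.equiv 2 (Fin n → ℂ)).symm (fun r => W r i / (σ : ℂ)) with hu_def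
  -- the normalized columns of Z for nonzero e
  set v : {j : Fin k // e j ≠ 0} → EuclideanSpace ℂ (Fin n) :=
    fun j => (WithLp.equiv 2 (Fin n → ℂ)).symm
      (fun r => Z r j.1 / ((Real.sqrt (e j.1) : ℝ) : ℂ)) with hv_def
  have hWentry : ∀ i' i'' : Fin k, (∑ r, (starRingEnd ℂ) (W r i') * W r i'')
      = Matrix.diagonal (fun i => ((d i : ℝ) : ℂ)) i' i'' := by
    intro i' i''
    rw [← hW]
    simp [Matrix.mul_apply, Matrix.conjTranspose_apply]
  have hZentry : ∀ j' j'' : Fin k, (∑ r, (starRingEnd ℂ) (Z r j') * Z r j'')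
      = Matrix.diagonal (fun j => ((e j : ℝ) : ℂ)) j' j'' := by
    intro j' j''
    rw [← hZ]
    simp [Matrix.mul_apply, Matrix.conjTranspose_apply]
  -- orthonormality of v
  have hv_orth : Orthonormal ℂ v := by
    rw [orthonormal_iff_ite]
    intro j j'
    have hinner : (inner ℂ (v j) (v j') : ℂ)
        = (∑ r, (starRingEnd ℂ) (Z r j.1) * Z r j'.1)
          / ((Real.sqrt (e j.1) : ℂ) * (Real.sqrt (e j'.1) : ℂ)) := by
      rw [PiLp.inner_apply]
      rw [Finset.sum_div]
      refine Finset.sum_congr rfl fun r _ => ?_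
      simp only [hv_def, WithLp.equiv_symm_apply, PiLp.toLp_apply, RCLike.inner_apply, map_div₀,
        Complex.conj_ofReal]
      ring
    rw [hinner, hZentry]
    rcases eq_or_ne j j' with rfl | hne
    · rw [Matrix.diagonal_apply_eq, if_pos rfl]
      have hej : 0 < e j.1 := lt_of_le_of_ne (he j.1) (Ne.symm j.2)
      rw [← Complex.ofReal_mul, Real.mul_self_sqrt (he j.1)]
      exact div_self (Complex.ofReal_ne_zero.2 j.2)
    · rw [Matrix.diagonal_apply_ne _ (fun h => hne (Subtype.ext h)), if_neg hne, zero_div]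
  -- Bessel's inequality
  have hbessel := hv_orth.sum_inner_products_le (s := (Finset.univ : Finset {j : Fin k // e j ≠ 0})) u
  -- ‖u‖ ^ 2 = 1
  have hWcol : ∑ r, ‖W r i‖ ^ 2 = d i := by
    have h1 := col_norm_sq W i
    rw [hW, Matrix.diagonal_apply_eq] at h1
    exact_mod_cast h1
  have hnorm_u : ‖u‖ ^ 2 = 1 := by
    rw [EuclideanSpace.norm_eq, Real.sq_sqrt (by positivity)]
    have h2 : ∀ r, ‖u r‖ ^ 2 = ‖W r i‖ ^ 2 / d i := by
      intro r
      simp only [hu_def, WithLp.equiv_symm_apply, PiLp.toLp_apply, norm_div,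
        Complex.norm_real, Real.norm_eq_abs, abs_of_pos hσpos]
      rw [div_pow, hσdef, Real.sq_sqrt (hd i)]
    simp only [h2, ← Finset.sum_div, hWcol]
    field_simp
  -- the row sum
  set β : Fin k → ℝ := fun j => if e j = 0 then 0
    else ‖(Wᴴ * Z) i j‖ / (σ * Real.sqrt (e j)) with hβ_def
  have hstep1 : ∑ j, (if d i = 0 ∨ e j = 0 then (0:ℝ)
      else ‖M j i‖ * ‖(Wᴴ * Z) i j‖
        / (Real.sqrt (d i) * Real.sqrt (e j)))
      = ∑ j, ‖M j i‖ * β j := by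
    refine Finset.sum_congr rfl fun j _ => ?_
    by_cases hej : e j = 0
    · simp [hej, hβ_def]
    · rw [if_neg (by tauto), hβ_def]
      simp only [hej, if_false]
      rw [mul_div_assoc]
  have hβsq : ∑ j, β j ^ 2 ≤ 1 := by
    have hsub : ∑ j, β j ^ 2 = ∑ j : {j : Fin k // e j ≠ 0}, β j.1 ^ 2 := by
      rw [← Finset.sum_subtype (Finset.univ.filter (fun j => e j ≠ 0))
        (p := fun j => e j ≠ 0) (by simp) (fun j => β j ^ 2), Finset.sum_filter]
      refine Finset.sum_congr rfl fun j _ => ?_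
      by_cases hej : e j = 0
      · simp [hej, hβ_def]
      · simp [hej]
    have hinner_eq : ∀ j : {j : Fin k // e j ≠ 0}, ‖(inner ℂ (v j) u : ℂ)‖ = β j.1 := by
      intro j
      have hej : 0 < e j.1 := lt_of_le_of_ne (he j.1) (Ne.symm j.2)
      have h3 : (inner ℂ (v j) u : ℂ)
          = (starRingEnd ℂ) ((Wᴴ * Z) i j.1) / ((Real.sqrt (e j.1) : ℂ) * (σ : ℂ)) := by
        rw [PiLp.inner_apply]
        have h4 : (starRingEnd ℂ) ((Wᴴ * Z) i j.1)
            = ∑ r, (starRingEnd ℂ) (Z r j.1) * W r i := by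
          rw [Matrix.mul_apply, map_sum]
          refine Finset.sum_congr rfl fun r _ => ?_
          simp only [Matrix.conjTranspose_apply, RingHom.map_mul, Complex.star_def,
            Complex.conj_conj]
          ring
        rw [h4, Finset.sum_div]
        refine Finset.sum_congr rfl fun r _ => ?_
        simp only [hv_def, hu_def, WithLp.equiv_symm_apply, PiLp.toLp_apply, RCLike.inner_apply, map_div₀,
          Complex.conj_ofReal]
        ring
      rw [h3, hβ_def]
      simp only [j.2, if_false]
      rw [norm_div, RCLike.norm_conj]
      have : ‖((Real.sqrt (e j.1) : ℂ) * (σ : ℂ))‖ = Real.sqrt (e j.1) * σ := by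
        rw [norm_mul, Complex.norm_real, Complex.norm_real, Real.norm_eq_abs, Real.norm_eq_abs,
          abs_of_pos (Real.sqrt_pos.2 hej), abs_of_pos hσpos]
      rw [this, mul_comm (Real.sqrt (e j.1)) σ]
    calc ∑ j, β j ^ 2 = ∑ j : {j : Fin k // e j ≠ 0}, β j.1 ^ 2 := hsub
      _ = ∑ j : {j : Fin k // e j ≠ 0}, ‖(inner ℂ (v j) u : ℂ)‖ ^ 2 := by
          refine Finset.sum_congr rfl fun j _ => ?_
          rw [hinner_eq j]
      _ ≤ ‖u‖ ^ 2 := hbessel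
      _ = 1 := hnorm_u
  rw [hstep1]
  calc ∑ j, ‖M j i‖ * β j
      ≤ Real.sqrt (∑ j, ‖M j i‖ ^ 2) * Real.sqrt (∑ j, β j ^ 2) := cs_sqrt _ _ _
    _ ≤ Real.sqrt 1 * Real.sqrt 1 := by
        apply mul_le_mul
        · rw [hM]
        · exact Real.sqrt_le_sqrt hβsq
        · exact Real.sqrt_nonneg _
        · exact Real.sqrt_nonneg _
    _ = 1 := by rw [Real.sqrt_one, mul_one]

end

lemma fin_sum_to_range {k : ℕ} (F : Fin k → ℝ) :
    ∑ i : Fin k, F i = ∑ p ∈ Finset.range k, (if h : p < k then F ⟨p, h⟩ else 0) := by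
  rw [← Fin.sum_univ_eq_sum_range (fun p => if h : p < k then F ⟨p, h⟩ else 0) k]
  exact Finset.sum_congr rfl fun i _ => by simp [dif_pos i.isLt]

end VNaux

section SVfacts

variable {n k : ℕ} (B : Matrix (Fin n) (Fin k) ℂ)

lemma sv_nonneg (i : Fin k) : 0 ≤ sv B i := Real.sqrt_nonneg _

lemma sv_antitone {i j : Fin k} (hij : i ≤ j) : sv B j ≤ sv B i := by
  unfold sv sortedDesc
  exact Tuple.monotone_sort _ (Fin.rev_le_rev.2 hij)

/-- `sv B` is the composition of the unsorted singular values with a permutation. -/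
lemma sv_eq_comp_perm :
    ∀ i : Fin k, sv B i = Real.sqrt
      ((Matrix.posSemidef_conjTranspose_mul_self B).isHermitian.eigenvalues
        ((Fin.revPerm.trans (Tuple.sort fun i => Real.sqrt
          ((Matrix.posSemidef_conjTranspose_mul_self B).isHermitian.eigenvalues i))) i)) :=
  fun i => rfl

end SVfacts

/-- Von Neumann's trace inequality. -/
theorem vonNeumann_trace_inequality {n k : ℕ} (hkn : k ≤ n)
    (B C : Matrix (Fin n) (Fin k) ℂ) :
    ‖Matrix.trace (Bᴴ * C)‖ ≤ ∑ i, sv B i * sv C i := by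
  classical
  set hBh : (Bᴴ * B).IsHermitian :=
    (Matrix.posSemidef_conjTranspose_mul_self B).isHermitian with hBh_def
  set hCh : (Cᴴ * C).IsHermitian :=
    (Matrix.posSemidef_conjTranspose_mul_self C).isHermitian with hCh_def
  set d : Fin k → ℝ := hBh.eigenvalues with hd_def
  set e : Fin k → ℝ := hCh.eigenvalues with he_def
  have hd : ∀ i, 0 ≤ d i := fun i =>
    (Matrix.posSemidef_conjTranspose_mul_self B).eigenvalues_nonneg i
  have he : ∀ j, 0 ≤ e j := fun j =>
    (Matrix.posSemidef_conjTranspose_mul_self C).eigenvalues_nonneg j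
  set V : Matrix (Fin k) (Fin k) ℂ := (hBh.eigenvectorUnitary : Matrix (Fin k) (Fin k) ℂ) with hV_def
  set Y : Matrix (Fin k) (Fin k) ℂ := (hCh.eigenvectorUnitary : Matrix (Fin k) (Fin k) ℂ) with hY_def
  set W : Matrix (Fin n) (Fin k) ℂ := B * V with hW_def
  set Z : Matrix (Fin n) (Fin k) ℂ := C * Y with hZ_def
  have hWW : Wᴴ * W = Matrix.diagonal (fun i => ((d i : ℝ) : ℂ)) := by
    rw [hW_def, Matrix.conjTranspose_mul, Matrix.mul_assoc, ← Matrix.mul_assoc Bᴴ B V,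
      ← Matrix.mul_assoc, ← Matrix.star_eq_conjTranspose V]
    have h := hBh.conjStarAlgAut_star_eigenvectorUnitary
    rw [Unitary.conjStarAlgAut_star_apply] at h
    exact h
  have hZZ : Zᴴ * Z = Matrix.diagonal (fun j => ((e j : ℝ) : ℂ)) := by
    rw [hZ_def, Matrix.conjTranspose_mul, Matrix.mul_assoc, ← Matrix.mul_assoc Cᴴ C Y,
      ← Matrix.mul_assoc, ← Matrix.star_eq_conjTranspose Y]
    have h := hCh.conjStarAlgAut_star_eigenvectorUnitary
    rw [Unitary.conjStarAlgAut_star_apply] at h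
    exact h
  set M : Matrix (Fin k) (Fin k) ℂ := Yᴴ * V with hM_def
  set N : Matrix (Fin k) (Fin k) ℂ := Wᴴ * Z with hN_def
  -- M is unitary
  have hMu : M ∈ Matrix.unitaryGroup (Fin k) ℂ := by
    rw [hM_def, ← Matrix.star_eq_conjTranspose]
    exact mul_mem (Unitary.star_mem hCh.eigenvectorUnitary.2) hBh.eigenvectorUnitary.2
  -- trace identity
  have htr : Matrix.trace (Bᴴ * C) = Matrix.trace (M * N) := by
    have hVu : V * Vᴴ = 1 := by
      rw [← Matrix.star_eq_conjTranspose]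
      exact (Matrix.mem_unitaryGroup_iff).1 hBh.eigenvectorUnitary.2
    have hYu : Y * Yᴴ = 1 := by
      rw [← Matrix.star_eq_conjTranspose]
      exact (Matrix.mem_unitaryGroup_iff).1 hCh.eigenvectorUnitary.2
    have hB_eq : Bᴴ = V * Wᴴ := by
      rw [hW_def, Matrix.conjTranspose_mul, ← Matrix.mul_assoc, hVu, Matrix.one_mul]
    have hC_eq : C = Z * Yᴴ := by
      rw [hZ_def, Matrix.mul_assoc, hYu, Matrix.mul_one]
    rw [hB_eq, hC_eq, hM_def, hN_def]
    rw [show V * Wᴴ * (Z * Yᴴ) = V * (Wᴴ * Z * Yᴴ) by simp only [Matrix.mul_assoc]]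
    rw [Matrix.trace_mul_comm, Matrix.mul_assoc, Matrix.trace_mul_comm,
      ← Matrix.mul_assoc]
  -- column norms
  have hWcol : ∀ i, ∑ r, ‖W r i‖ ^ 2 = d i := by
    intro i
    have h1 := col_norm_sq W i
    rw [hWW, Matrix.diagonal_apply_eq] at h1
    exact_mod_cast h1
  have hZcol : ∀ j, ∑ r, ‖Z r j‖ ^ 2 = e j := by
    intro j
    have h1 := col_norm_sq Z j
    rw [hZZ, Matrix.diagonal_apply_eq] at h1
    exact_mod_cast h1
  -- zero columns kill N
  have hWzero : ∀ i, d i = 0 → ∀ r, W r i = 0 := by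
    intro i hdi r
    have h1 : ∑ r, ‖W r i‖ ^ 2 = 0 := by rw [hWcol i, hdi]
    have h2 := (Finset.sum_eq_zero_iff_of_nonneg (fun r _ => sq_nonneg _)).1 h1 r
      (Finset.mem_univ r)
    have h3 : ‖W r i‖ = 0 := by
      have := sq_eq_zero_iff.1 h2
      exact this
    exact norm_eq_zero.1 h3
  have hZzero : ∀ j, e j = 0 → ∀ r, Z r j = 0 := by
    intro j hej r
    have h1 : ∑ r, ‖Z r j‖ ^ 2 = 0 := by rw [hZcol j, hej]
    have h2 := (Finset.sum_eq_zero_iff_of_nonneg (fun r _ => sq_nonneg _)).1 h1 r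
      (Finset.mem_univ r)
    exact norm_eq_zero.1 (sq_eq_zero_iff.1 h2)
  have hNzero : ∀ i j, (d i = 0 ∨ e j = 0) → N i j = 0 := by
    intro i j hij
    rw [hN_def, Matrix.mul_apply]
    refine Finset.sum_eq_zero fun r _ => ?_
    rcases hij with h | h
    · rw [Matrix.conjTranspose_apply, hWzero i h r, star_zero, zero_mul]
    · rw [hZzero j h r, mul_zero]
  -- the substochastic matrix
  set S : Fin k → Fin k → ℝ := fun i j => if d i = 0 ∨ e j = 0 then 0
    else ‖M j i‖ * ‖N i j‖
      / (Real.sqrt (d i) * Real.sqrt (e j)) with hS_def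
  have hSnn : ∀ i j, 0 ≤ S i j := by
    intro i j
    rw [hS_def]
    dsimp only
    split
    · exact le_refl 0
    · positivity
  have hentry : ∀ i j, ‖M j i‖ * ‖N i j‖
      = Real.sqrt (d i) * Real.sqrt (e j) * S i j := by
    intro i j
    rw [hS_def]
    dsimp only
    by_cases h : d i = 0 ∨ e j = 0
    · rw [if_pos h, mul_zero, hNzero i j h, norm_zero, mul_zero]
    · rw [if_neg h]
      push_neg at h
      have h1 : Real.sqrt (d i) ≠ 0 := by
        rw [Real.sqrt_ne_zero' ]
        exact lt_of_le_of_ne (hd i) (Ne.symm h.1)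
      have h2 : Real.sqrt (e j) ≠ 0 := by
        rw [Real.sqrt_ne_zero']
        exact lt_of_le_of_ne (he j) (Ne.symm h.2)
      field_simp
  -- unitary column and row sums of M
  have hMcol : ∀ i, ∑ j, ‖M j i‖ ^ 2 = 1 := by
    intro i
    have h1 : Mᴴ * M = 1 := by
      rw [Matrix.mem_unitaryGroup_iff'] at hMu
      simpa [Matrix.star_eq_conjTranspose] using hMu
    have h2 := col_norm_sq M i
    rw [h1] at h2
    have h3 : ((∑ j : Fin k, ‖M j i‖ ^ 2 : ℝ) : ℂ) = ((1:ℝ) : ℂ) := by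
      rw [h2]; simp
    exact_mod_cast h3
  have hMrow : ∀ j, ∑ i, ‖M j i‖ ^ 2 = 1 := by
    intro j
    have hMHu : Mᴴ ∈ Matrix.unitaryGroup (Fin k) ℂ := by
      rw [← Matrix.star_eq_conjTranspose]
      exact Unitary.star_mem hMu
    have h1 : (Mᴴ)ᴴ * Mᴴ = 1 := by
      rw [Matrix.mem_unitaryGroup_iff'] at hMHu
      simpa [Matrix.star_eq_conjTranspose] using hMHu
    have h2 := col_norm_sq Mᴴ j
    rw [h1] at h2
    have h3 : ((∑ i : Fin k, ‖Mᴴ i j‖ ^ 2 : ℝ) : ℂ) = ((1:ℝ) : ℂ) := by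
      rw [h2]; simp
    have h4 : ∀ i, ‖Mᴴ i j‖ = ‖M j i‖ := by
      intro i
      rw [Matrix.conjTranspose_apply, Complex.star_def, Complex.norm_conj]
    have h5 : ∑ i : Fin k, ‖Mᴴ i j‖ ^ 2 = 1 := by exact_mod_cast h3
    rw [← h5]
    exact Finset.sum_congr rfl fun i _ => by rw [h4 i]
  -- row sums of S
  have hrowF : ∀ i, ∑ j, S i j ≤ 1 := by
    intro i
    exact Smat_rowsum_le W Z M d e hd he hWW hZZ i (hMcol i)
  -- column sums of S via symmetry
  have hScol_swap : ∀ i j, S i j = (if e j = 0 ∨ d i = 0 then (0:ℝ)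
      else ‖Mᴴ i j‖ * ‖(Zᴴ * W) j i‖
        / (Real.sqrt (e j) * Real.sqrt (d i))) := by
    intro i j
    rw [hS_def]
    dsimp only
    by_cases h : e j = 0 ∨ d i = 0
    · rw [if_pos (Or.symm h), if_pos h]
    · rw [if_neg (fun hh => h (Or.symm hh)), if_neg h]
      have habs1 : ‖Mᴴ i j‖ = ‖M j i‖ := by
        rw [Matrix.conjTranspose_apply, Complex.star_def, Complex.norm_conj]
      have habs2 : ‖(Zᴴ * W) j i‖ = ‖N i j‖ := by
        have hZW : Zᴴ * W = Nᴴ := by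
          rw [hN_def]
          simp [Matrix.conjTranspose_mul]
        rw [hZW, Matrix.conjTranspose_apply, Complex.star_def, Complex.norm_conj]
      rw [habs1, habs2, mul_comm (Real.sqrt (e j)) (Real.sqrt (d i))]
  have hcolF : ∀ j, ∑ i, S i j ≤ 1 := by
    intro j
    have hMH : ∑ i, ‖Mᴴ i j‖ ^ 2 = 1 := by
      rw [← hMrow j]
      refine Finset.sum_congr rfl fun i _ => ?_
      rw [Matrix.conjTranspose_apply, Complex.star_def, Complex.norm_conj]
    have h1 := Smat_rowsum_le Z W Mᴴ e d he hd hZZ hWW j hMH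
    calc ∑ i, S i j = ∑ i, (if e j = 0 ∨ d i = 0 then (0:ℝ)
        else ‖Mᴴ i j‖ * ‖(Zᴴ * W) j i‖
          / (Real.sqrt (e j) * Real.sqrt (d i))) :=
        Finset.sum_congr rfl fun i _ => hScol_swap i j
      _ ≤ 1 := h1
  -- absolute value of the trace
  have habs : ‖Matrix.trace (M * N)‖
      ≤ ∑ i, ∑ j, ‖M j i‖ * ‖N i j‖ := by
    calc ‖Matrix.trace (M * N)‖
        ≤ ∑ j, ‖(M * N) j j‖ := norm_sum_le _ _
      _ = ∑ j, ‖∑ i, M j i * N i j‖ := by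
          refine Finset.sum_congr rfl fun j _ => ?_
          rw [Matrix.mul_apply]
      _ ≤ ∑ j, ∑ i, ‖M j i * N i j‖ :=
          Finset.sum_le_sum fun j _ => norm_sum_le _ _
      _ = ∑ j, ∑ i, ‖M j i‖ * ‖N i j‖ := by
          refine Finset.sum_congr rfl fun j _ => Finset.sum_congr rfl fun i _ => ?_
          rw [norm_mul]
      _ = ∑ i, ∑ j, ‖M j i‖ * ‖N i j‖ := Finset.sum_comm
  have hmain : ‖Matrix.trace (Bᴴ * C)‖
      ≤ ∑ i, ∑ j, Real.sqrt (d i) * Real.sqrt (e j) * S i j := by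
    rw [htr]
    refine habs.trans (le_of_eq ?_)
    exact Finset.sum_congr rfl fun i _ => Finset.sum_congr rfl fun j _ => hentry i j
  -- permutations sorting the singular values
  set fB : Fin k → ℝ := fun i => Real.sqrt (d i) with hfB_def
  set fC : Fin k → ℝ := fun j => Real.sqrt (e j) with hfC_def
  set eB : Equiv.Perm (Fin k) := Fin.revPerm.trans (Tuple.sort fB) with heB_def
  set eC : Equiv.Perm (Fin k) := Fin.revPerm.trans (Tuple.sort fC) with heC_def
  have hsvB : ∀ i, sv B i = fB (eB i) := fun i => rfl
  have hsvC : ∀ j, sv C j = fC (eC j) := fun j => rfl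
  have hperm : ∑ i, ∑ j, Real.sqrt (d i) * Real.sqrt (e j) * S i j
      = ∑ i, ∑ j, sv B i * sv C j * S (eB i) (eC j) := by
    calc ∑ i, ∑ j, fB i * fC j * S i j
        = ∑ i, ∑ j, fB (eB i) * fC j * S (eB i) j :=
          (Equiv.sum_comp eB (fun i => ∑ j, fB i * fC j * S i j)).symm
      _ = ∑ i, ∑ j, fB (eB i) * fC (eC j) * S (eB i) (eC j) :=
          Finset.sum_congr rfl fun i _ =>
            (Equiv.sum_comp eC (fun j => fB (eB i) * fC j * S (eB i) j)).symm
      _ = ∑ i, ∑ j, sv B i * sv C j * S (eB i) (eC j) := by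
          refine Finset.sum_congr rfl fun i _ => Finset.sum_congr rfl fun j _ => ?_
          rw [hsvB i, hsvC j]
  -- move to ℕ-indexed sums
  set σ' : ℕ → ℝ := fun p => if h : p < k then sv B ⟨p, h⟩ else 0 with hσ'_def
  set τ' : ℕ → ℝ := fun p => if h : p < k then sv C ⟨p, h⟩ else 0 with hτ'_def
  set S' : ℕ → ℕ → ℝ := fun p q => if hp : p < k then
      (if hq : q < k then S (eB ⟨p, hp⟩) (eC ⟨q, hq⟩) else 0) else 0 with hS'_def
  have hσ'anti : Antitone σ' := by
    intro p q hpq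
    rw [hσ'_def]
    dsimp only
    split_ifs with h1 h2
    · exact sv_antitone B (Fin.mk_le_mk.2 hpq)
    · omega
    · exact sv_nonneg B _
    · exact le_refl 0
  have hτ'anti : Antitone τ' := by
    intro p q hpq
    rw [hτ'_def]
    dsimp only
    split_ifs with h1 h2
    · exact sv_antitone C (Fin.mk_le_mk.2 hpq)
    · omega
    · exact sv_nonneg C _
    · exact le_refl 0
  have hσ'k : σ' k = 0 := by rw [hσ'_def]; simp
  have hτ'k : τ' k = 0 := by rw [hτ'_def]; simp
  have hS'nn : ∀ p q, 0 ≤ S' p q := by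
    intro p q
    rw [hS'_def]
    dsimp only
    split_ifs
    · exact hSnn _ _
    · exact le_refl 0
    · exact le_refl 0
  have hrow' : ∀ p, ∑ q ∈ Finset.range k, S' p q ≤ 1 := by
    intro p
    by_cases hp : p < k
    · have h1 : ∑ q ∈ Finset.range k, S' p q = ∑ q : Fin k, S (eB ⟨p, hp⟩) (eC q) := by
        rw [fin_sum_to_range (fun q : Fin k => S (eB ⟨p, hp⟩) (eC q))]
        refine Finset.sum_congr rfl fun q hq => ?_
        rw [Finset.mem_range] at hq
        rw [hS'_def]
        simp [dif_pos hp, dif_pos hq]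
      rw [h1, Equiv.sum_comp eC (fun q => S (eB ⟨p, hp⟩) q)]
      exact hrowF _
    · have h1 : ∑ q ∈ Finset.range k, S' p q = 0 := by
        refine Finset.sum_eq_zero fun q _ => ?_
        rw [hS'_def]
        simp [dif_neg hp]
      rw [h1]; norm_num
  have hcol' : ∀ q, ∑ p ∈ Finset.range k, S' p q ≤ 1 := by
    intro q
    by_cases hq : q < k
    · have h1 : ∑ p ∈ Finset.range k, S' p q = ∑ p : Fin k, S (eB p) (eC ⟨q, hq⟩) := by
        rw [fin_sum_to_range (fun p : Fin k => S (eB p) (eC ⟨q, hq⟩))]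
        refine Finset.sum_congr rfl fun p hp => ?_
        rw [Finset.mem_range] at hp
        rw [hS'_def]
        simp [dif_pos hp, dif_pos hq]
      rw [h1, Equiv.sum_comp eB (fun p => S p (eC ⟨q, hq⟩))]
      exact hcolF _
    · have h1 : ∑ p ∈ Finset.range k, S' p q = 0 := by
        refine Finset.sum_eq_zero fun p _ => ?_
        rw [hS'_def]
        by_cases hp : p < k <;> simp [hp, hq]
      rw [h1]; norm_num
  have hL : ∑ i : Fin k, ∑ j : Fin k, sv B i * sv C j * S (eB i) (eC j)
      = ∑ p ∈ Finset.range k, ∑ q ∈ Finset.range k, σ' p * τ' q * S' p q := by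
    rw [fin_sum_to_range (fun i : Fin k => ∑ j : Fin k, sv B i * sv C j * S (eB i) (eC j))]
    refine Finset.sum_congr rfl fun p hp => ?_
    rw [Finset.mem_range] at hp
    rw [dif_pos hp,
      fin_sum_to_range (fun j : Fin k => sv B ⟨p, hp⟩ * sv C j * S (eB ⟨p, hp⟩) (eC j))]
    refine Finset.sum_congr rfl fun q hq => ?_
    rw [Finset.mem_range] at hq
    rw [dif_pos hq, hσ'_def, hτ'_def, hS'_def]
    simp [dif_pos hp, dif_pos hq]
  have hR : ∑ i ∈ Finset.range k, σ' i * τ' i = ∑ i : Fin k, sv B i * sv C i := by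
    rw [fin_sum_to_range (fun i : Fin k => sv B i * sv C i)]
    refine (Finset.sum_congr rfl fun p hp => ?_).symm
    rw [Finset.mem_range] at hp
    rw [dif_pos hp, hσ'_def, hτ'_def]
    simp [dif_pos hp]
  calc ‖Matrix.trace (Bᴴ * C)‖
      ≤ ∑ i, ∑ j, Real.sqrt (d i) * Real.sqrt (e j) * S i j := hmain
    _ = ∑ i, ∑ j, sv B i * sv C j * S (eB i) (eC j) := hperm
    _ = ∑ p ∈ Finset.range k, ∑ q ∈ Finset.range k, σ' p * τ' q * S' p q := hL
    _ ≤ ∑ i ∈ Finset.range k, σ' i * τ' i :=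
        key_substochastic σ' τ' hσ'anti hτ'anti hσ'k hτ'k S' hS'nn hrow' hcol'
    _ = ∑ i : Fin k, sv B i * sv C i := hR
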